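/- arXiv:2401.08521 — 2 statements merged into one kernel-verified Lean document; each statement's English description precedes it below -/
import Mathlib

section
/- Let M = [[1, 1], [1, 2]] be the Arnol'd cat map matrix, acting on ℝ², and let ρ₋ = (3 − √5)/2 < 1 be its smaller eigenvalue. Let f, g : ℝ² → ℂ be trigonometric polynomials, i.e. f(x) = Σ_{k ∈ S} c_k·exp(2πi k·x) and g(x) = Σ_{k ∈ S'} d_k·exp(2πi k·x) for finite sets S, S' ⊂ ℤ² and complex coefficients c_k, d_k. Define the correlation function C_n(f, g*) = ∫_{[0,1]²} f(Mⁿx)·conj(g(x)) dx − (∫_{[0,1]²} f(x) dx)·conj(∫_{[0,1]²} g(x) dx). Then there exists a constant K ≥ 0, depending only on f and g, such that |C_n(f, g*)| ≤ K·ρ₋ⁿ for all n ≥ 0. In particular the Arnol'd cat map is exponentially mixing with mixing time 1/log ρ₊, where ρ₊ = (3 + √5)/2. -/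
open Matrix MeasureTheory Complex

noncomputable def ec (k : Fin 2 → ℤ) (x : Fin 2 → ℝ) : ℂ :=
  Complex.exp (2 * Real.pi * Complex.I * ((∑ i, (k i : ℝ) * x i : ℝ) : ℂ))

lemma ec_cont (k : Fin 2 → ℤ) : Continuous (ec k) := by
  unfold ec; fun_prop

lemma ec_integrable (k : Fin 2 → ℤ) :
    IntegrableOn (ec k) (Set.Icc (0 : Fin 2 → ℝ) 1) := (ec_cont k).integrableOn_Icc

lemma ec_conj (l : Fin 2 → ℤ) (x : Fin 2 → ℝ) :
    (starRingEnd ℂ) (ec l x) = ec (-l) x := by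
  unfold ec
  rw [← Complex.exp_conj]
  congr 1
  have h1 : ∀ i, ((-l) i : ℝ) * x i = -((l i : ℝ) * x i) := fun i => by
    simp [Pi.neg_apply]
  simp only [h1, Finset.sum_neg_distrib]
  rw [_root_.map_mul, _root_.map_mul, _root_.map_mul, Complex.conj_I, Complex.conj_ofReal]
  rw [Complex.ofReal_neg, Complex.conj_ofReal, map_ofNat]
  ring

lemma ec_mul (a b : Fin 2 → ℤ) (x : Fin 2 → ℝ) :
    ec a x * ec b x = ec (a + b) x := by
  unfold ec
  rw [← Complex.exp_add]
  congr 1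
  push_cast [Pi.add_apply]
  rw [← mul_add, ← Finset.sum_add_distrib]
  congr 1
  exact Finset.sum_congr rfl fun i _ => by ring

lemma oneD (m : ℤ) : ∫ t in Set.Icc (0:ℝ) 1, Complex.exp (2 * Real.pi * Complex.I * m * t)
    = if m = 0 then 1 else 0 := by
  rw [MeasureTheory.integral_Icc_eq_integral_Ioc, ← intervalIntegral.integral_of_le zero_le_one]
  by_cases hm : m = 0
  · simp [hm]
  · have hc : (2 * Real.pi * Complex.I * m : ℂ) ≠ 0 := by
      simp [Real.pi_ne_zero, Complex.I_ne_zero, hm, Complex.ext_iff]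
    rw [if_neg hm]
    have := integral_exp_mul_complex (a := 0) (b := 1) hc
    simp only [Complex.ofReal_one, Complex.ofReal_zero, mul_one, mul_zero, Complex.exp_zero] at this
    rw [this]
    have : Complex.exp (2 * Real.pi * Complex.I * m) = 1 := by
      rw [show (2 * Real.pi * Complex.I * m : ℂ) = m * (2 * Real.pi * Complex.I) by ring]
      exact Complex.exp_int_mul_two_pi_mul_I m
    rw [this, sub_self, zero_div]

lemma ec_prod (k : Fin 2 → ℤ) (x : Fin 2 → ℝ) :
    ec k x = ∏ i, Complex.exp (2 * Real.pi * Complex.I * (k i) * (x i)) := by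
  rw [ec, ← Complex.exp_sum]
  congr 1
  push_cast
  rw [Finset.mul_sum]
  exact Finset.sum_congr rfl fun i _ => by ring

lemma orth (k : Fin 2 → ℤ) :
    ∫ x in Set.Icc (0 : Fin 2 → ℝ) 1, ec k x = if k = 0 then 1 else 0 := by
  have h1 : ∫ x in Set.Icc (0 : Fin 2 → ℝ) 1, ec k x
      = ∫ x : Fin 2 → ℝ, ∏ i, (Set.Icc (0:ℝ) 1).indicator
          (fun t => Complex.exp (2 * Real.pi * Complex.I * (k i) * t)) (x i) := by
    rw [← MeasureTheory.integral_indicator measurableSet_Icc]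
    congr 1
    funext x
    rw [← Set.pi_univ_Icc]
    simp only [Pi.zero_apply, Pi.one_apply]
    by_cases hx : x ∈ Set.pi Set.univ fun i => Set.Icc (0:ℝ) 1
    · rw [Set.indicator_of_mem hx, ec_prod]
      exact Finset.prod_congr rfl fun i _ => by
        rw [Set.indicator_of_mem (hx i (Set.mem_univ i))]
    · rw [Set.indicator_of_notMem hx]
      obtain ⟨i, hi⟩ : ∃ i, x i ∉ Set.Icc (0:ℝ) 1 := by
        by_contra h; push_neg at h; exact hx fun i _ => h i
      exact (Finset.prod_eq_zero (Finset.mem_univ i)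
        (by rw [Set.indicator_of_notMem hi])).symm
  rw [h1, MeasureTheory.integral_fintype_prod_volume_eq_prod
    (f := fun i => (Set.Icc (0:ℝ) 1).indicator
      (fun t => Complex.exp (2 * Real.pi * Complex.I * (k i) * t)))]
  have h2 : ∀ i : Fin 2, (∫ t : ℝ, (Set.Icc (0:ℝ) 1).indicator
      (fun t => Complex.exp (2 * Real.pi * Complex.I * (k i) * t)) t)
      = if k i = 0 then 1 else 0 := fun i => by
    rw [MeasureTheory.integral_indicator measurableSet_Icc, oneD]
  simp_rw [h2]
  by_cases hk : k = 0
  · simp [hk]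
  · rw [if_neg hk]
    obtain ⟨i, hi⟩ := Function.ne_iff.mp hk
    exact Finset.prod_eq_zero (Finset.mem_univ i) (by simpa using hi)

def Nz : Matrix (Fin 2) (Fin 2) ℤ := !![1, 1; 1, 2]
def Ni : Matrix (Fin 2) (Fin 2) ℤ := !![2, -1; -1, 1]

lemma Ni_Nz : Ni * Nz = 1 := by
  rw [Ni, Nz, Matrix.mul_fin_two, Matrix.one_fin_two]
  norm_num

lemma Nz_Ni : Nz * Ni = 1 := by
  rw [Ni, Nz, Matrix.mul_fin_two, Matrix.one_fin_two]
  norm_num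

lemma cast_pow (n : ℕ) : (!![(1 : ℝ), 1; 1, 2]) ^ n = (Nz ^ n).map (Int.cast : ℤ → ℝ) := by
  have h : !![(1 : ℝ), 1; 1, 2] = (Int.castRingHom ℝ).mapMatrix Nz := by
    ext i j; fin_cases i <;> fin_cases j <;> simp [Nz]
  rw [h, ← map_pow]
  rfl

lemma Nz_sym (n : ℕ) : (Nz ^ n) 1 0 = (Nz ^ n) 0 1 := by
  have h : (Nz ^ n)ᵀ = Nz ^ n := by
    rw [Matrix.transpose_pow]
    congr 1
    ext i j; fin_cases i <;> fin_cases j <;> rfl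
  exact (congrFun (congrFun h 1) 0).symm ▸ rfl

lemma key (n : ℕ) (k : Fin 2 → ℤ) (x : Fin 2 → ℝ) :
    ec k ((!![(1 : ℝ), 1; 1, 2] ^ n).mulVec x) = ec ((Nz ^ n).mulVec k) x := by
  unfold ec
  congr 2
  have hs := Nz_sym n
  rw [cast_pow]
  simp only [Matrix.mulVec, dotProduct, Fin.sum_univ_two, Matrix.map_apply]
  push_cast
  rw [hs]
  ring

lemma pow_entries : ∀ n : ℕ, 1 ≤ n → ∃ a b : ℤ, 1 ≤ a ∧ 1 ≤ b ∧
    a * (a + b) - b * b = 1 ∧ Nz ^ n = !![a, b; b, a + b] := by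
  intro n hn
  induction n with
  | zero => omega
  | succ m ih =>
    rcases Nat.eq_or_lt_of_le hn with h1 | h1
    · exact ⟨1, 1, le_refl _, le_refl _, by ring, by rw [← h1, pow_one]; norm_num [Nz]⟩
    · obtain ⟨a, b, ha, hb, hdet, hN⟩ := ih (by omega)
      refine ⟨a + b, a + 2 * b, by omega, by omega, by ring_nf; ring_nf at hdet; linarith, ?_⟩
      rw [pow_succ, hN, Nz, Matrix.mul_fin_two]
      congr 1
      ring_nf

lemma fixpt (n : ℕ) (hn : 1 ≤ n) (k : Fin 2 → ℤ) (h : (Nz ^ n).mulVec k = k) : k = 0 := by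
  obtain ⟨a, b, ha, hb, hdet, hN⟩ := pow_entries n hn
  rw [hN] at h
  have e1 : a * k 0 + b * k 1 = k 0 := by
    have := congrFun h 0
    simpa [Matrix.mulVec, dotProduct, Fin.sum_univ_two] using this
  have e2 : b * k 0 + (a + b) * k 1 = k 1 := by
    have := congrFun h 1
    simpa [Matrix.mulVec, dotProduct, Fin.sum_univ_two] using this
  have h0 : (2 - 2 * a - b) * k 0 = 0 := by linear_combination (a + b - 1) * e1 - b * e2 - k 0 * hdet
  have hk0 : k 0 = 0 := by
    rcases mul_eq_zero.mp h0 with h | h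
    · omega
    · exact h
  have hk1 : k 1 = 0 := by
    rw [hk0, mul_zero, zero_add] at e1
    rcases mul_eq_zero.mp (by linarith : b * k 1 = 0) with h | h
    · omega
    · exact h
  funext i
  fin_cases i <;> simp [hk0, hk1]

lemma mulVec_cancel (m : ℕ) (u v : Fin 2 → ℤ) (h : (Nz ^ m).mulVec u = (Nz ^ m).mulVec v) :
    u = v := by
  have hc : Commute Ni Nz := by rw [Commute, SemiconjBy, Ni_Nz, Nz_Ni]
  have h1 : Ni ^ m * Nz ^ m = 1 := by rw [← hc.mul_pow, Ni_Nz, one_pow]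
  have := congrArg (fun w => (Ni ^ m).mulVec w) h
  simpa only [Matrix.mulVec_mulVec, h1, Matrix.one_mulVec] using this

lemma inj_orbit (k : Fin 2 → ℤ) (hk : k ≠ 0) :
    Function.Injective (fun n : ℕ => (Nz ^ n).mulVec k) := by
  intro m n h
  simp only at h
  by_contra hne
  wlog hlt : m < n generalizing m n
  · exact this h.symm (Ne.symm hne) (by omega)
  have hsplit : (Nz ^ n) = Nz ^ m * Nz ^ (n - m) := by
    rw [← pow_add]; congr 1; omega
  rw [hsplit, ← Matrix.mulVec_mulVec] at h
  have := mulVec_cancel m _ _ h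
  exact hk (fixpt (n - m) (by omega) k this.symm)

/-- Exponential mixing of the Arnol'd cat map `M = [[1, 1], [1, 2]]`:
for trigonometric polynomials `f, g` on the torus, the correlation function
`C_n(f, g*) = ∫ f(Mⁿx)·conj(g(x)) dx − (∫ f)·conj(∫ g)` satisfies
`|C_n(f, g*)| ≤ K·ρ₋ⁿ` with `ρ₋ = (3 − √5)/2`, i.e. the mixing time is
`1/log ρ₊` with `ρ₊ = (3 + √5)/2`. -/
theorem acm_exponential_mixing (f g : (Fin 2 → ℝ) → ℂ)
    (hf : ∃ (S : Finset (Fin 2 → ℤ)) (c : (Fin 2 → ℤ) → ℂ), ∀ x, f x =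
      ∑ k ∈ S, c k * Complex.exp
        (2 * Real.pi * Complex.I * ((∑ i, (k i : ℝ) * x i : ℝ) : ℂ)))
    (hg : ∃ (S : Finset (Fin 2 → ℤ)) (c : (Fin 2 → ℤ) → ℂ), ∀ x, g x =
      ∑ k ∈ S, c k * Complex.exp
        (2 * Real.pi * Complex.I * ((∑ i, (k i : ℝ) * x i : ℝ) : ℂ))) :
    ∃ K : ℝ, 0 ≤ K ∧ ∀ n : ℕ,
      ‖(∫ x in Set.Icc (0 : Fin 2 → ℝ) 1,
            f (((!![(1 : ℝ), 1; 1, 2]) ^ n).mulVec x) * (starRingEnd ℂ) (g x))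
          - (∫ x in Set.Icc (0 : Fin 2 → ℝ) 1, f x) *
              (starRingEnd ℂ) (∫ x in Set.Icc (0 : Fin 2 → ℝ) 1, g x)‖
        ≤ K * ((3 - Real.sqrt 5) / 2) ^ n := by
  obtain ⟨S, c, hfe⟩ := hf
  obtain ⟨S', d, hge⟩ := hg
  have hfe' : ∀ x, f x = ∑ k ∈ S, c k * ec k x := hfe
  have hge' : ∀ x, g x = ∑ l ∈ S', d l * ec l x := hge
  set ρ : ℝ := (3 - Real.sqrt 5) / 2 with hρdef
  have hρpos : 0 < ρ := by
    have h5 : Real.sqrt 5 < 3 := by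
      rw [show (3:ℝ) = Real.sqrt 9 by rw [show (9:ℝ) = 3^2 by norm_num, Real.sqrt_sq]; norm_num]
      exact Real.sqrt_lt_sqrt (by norm_num) (by norm_num)
    rw [hρdef]; linarith
  -- value of ∫ f and ∫ g
  have hIf : (∫ x in Set.Icc (0 : Fin 2 → ℝ) 1, f x)
      = ∑ k ∈ S, c k * (if k = 0 then 1 else 0) := by
    rw [show f = fun x => ∑ k ∈ S, c k * ec k x from funext hfe']
    rw [MeasureTheory.integral_finset_sum S
      (fun k _ => ((ec_integrable k).const_mul (c k)))]
    exact Finset.sum_congr rfl fun k _ => by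
      rw [MeasureTheory.integral_const_mul, orth]
  have hIg : (∫ x in Set.Icc (0 : Fin 2 → ℝ) 1, g x)
      = ∑ l ∈ S', d l * (if l = 0 then 1 else 0) := by
    rw [show g = fun x => ∑ l ∈ S', d l * ec l x from funext hge']
    rw [MeasureTheory.integral_finset_sum S'
      (fun l _ => ((ec_integrable l).const_mul (d l)))]
    exact Finset.sum_congr rfl fun l _ => by
      rw [MeasureTheory.integral_const_mul, orth]
  -- value of the correlation integral
  have hIn : ∀ n : ℕ, (∫ x in Set.Icc (0 : Fin 2 → ℝ) 1,
        f (((!![(1 : ℝ), 1; 1, 2]) ^ n).mulVec x) * (starRingEnd ℂ) (g x))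
      = ∑ k ∈ S, ∑ l ∈ S', (c k * (starRingEnd ℂ) (d l)) *
          (if (Nz ^ n).mulVec k = l then 1 else 0) := by
    intro n
    have hpt : ∀ x : Fin 2 → ℝ, f (((!![(1 : ℝ), 1; 1, 2]) ^ n).mulVec x) * (starRingEnd ℂ) (g x)
        = ∑ k ∈ S, ∑ l ∈ S', (c k * (starRingEnd ℂ) (d l)) *
            ec ((Nz ^ n).mulVec k + -l) x := by
      intro x
      rw [hfe', hge', map_sum, Finset.sum_mul_sum]
      refine Finset.sum_congr rfl fun k _ => Finset.sum_congr rfl fun l _ => ?_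
      rw [_root_.map_mul, ec_conj, key n k x, ← ec_mul]
      ring
    rw [MeasureTheory.integral_congr_ae (Filter.Eventually.of_forall hpt)]
    rw [MeasureTheory.integral_finset_sum S (fun k _ =>
      MeasureTheory.integrable_finset_sum S' (fun l _ =>
        ((ec_integrable _).const_mul _)))]
    refine Finset.sum_congr rfl fun k _ => ?_
    rw [MeasureTheory.integral_finset_sum S' (fun l _ => ((ec_integrable _).const_mul _))]
    refine Finset.sum_congr rfl fun l _ => ?_
    rw [MeasureTheory.integral_const_mul, orth]
    congr 1
    exact if_congr add_neg_eq_zero rfl rfl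
  -- the bad set of times
  set T : Set ℕ := {n | ∃ k ∈ S, k ≠ 0 ∧ (Nz ^ n).mulVec k ∈ S'} with hTdef
  have hTfin : T.Finite := by
    have hsub : T ⊆ ⋃ k ∈ (S : Set (Fin 2 → ℤ)), ⋃ l ∈ (S' : Set (Fin 2 → ℤ)),
        {n : ℕ | k ≠ 0 ∧ (Nz ^ n).mulVec k = l} := by
      rintro n ⟨k, hkS, hk0, hkl⟩
      exact Set.mem_biUnion hkS (Set.mem_biUnion hkl ⟨hk0, rfl⟩)
    refine Set.Finite.subset ?_ hsub
    refine Set.Finite.biUnion S.finite_toSet fun k _ =>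
      Set.Finite.biUnion S'.finite_toSet fun l _ => ?_
    by_cases hk : k = 0
    · refine Set.Finite.subset (Set.finite_empty) ?_
      rintro n ⟨hk0, -⟩; exact absurd hk hk0
    · refine Set.Subsingleton.finite ?_
      rintro m ⟨-, hm⟩ n ⟨-, hn⟩
      exact inj_orbit k hk (hm.trans hn.symm)
  obtain ⟨N₀, hN₀⟩ := hTfin.bddAbove
  -- vanishing for n ∉ T
  have hvanish : ∀ n : ℕ, n ∉ T →
      (∫ x in Set.Icc (0 : Fin 2 → ℝ) 1,
          f (((!![(1 : ℝ), 1; 1, 2]) ^ n).mulVec x) * (starRingEnd ℂ) (g x))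
        - (∫ x in Set.Icc (0 : Fin 2 → ℝ) 1, f x) *
            (starRingEnd ℂ) (∫ x in Set.Icc (0 : Fin 2 → ℝ) 1, g x) = 0 := by
    intro n hn
    rw [hIn, hIf, hIg, sub_eq_zero, map_sum, Finset.sum_mul_sum]
    refine Finset.sum_congr rfl fun k hkS => Finset.sum_congr rfl fun l hlS => ?_
    rw [_root_.map_mul]
    have hconjite : (starRingEnd ℂ) (if l = 0 then (1:ℂ) else 0)
        = (if l = 0 then (1:ℂ) else 0) := by
      split <;> simp
    rw [hconjite]
    by_cases hk : k = 0
    · subst hk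
      rw [Matrix.mulVec_zero]
      rw [if_pos rfl, if_congr (eq_comm (a := (0 : Fin 2 → ℤ)) (b := l)) rfl rfl]
      ring
    · rw [if_neg hk]
      have : ¬ (Nz ^ n).mulVec k = l := by
        intro hEq
        exact hn ⟨k, hkS, hk, hEq ▸ hlS⟩
      rw [if_neg this]
      ring
  -- define the constant K
  refine ⟨∑ j ∈ Finset.range (N₀ + 1),
    ‖(∫ x in Set.Icc (0 : Fin 2 → ℝ) 1,
          f (((!![(1 : ℝ), 1; 1, 2]) ^ j).mulVec x) * (starRingEnd ℂ) (g x))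
        - (∫ x in Set.Icc (0 : Fin 2 → ℝ) 1, f x) *
            (starRingEnd ℂ) (∫ x in Set.Icc (0 : Fin 2 → ℝ) 1, g x)‖ / ρ ^ j, ?_, ?_⟩
  · exact Finset.sum_nonneg fun j _ => div_nonneg (norm_nonneg _) (le_of_lt (pow_pos hρpos j))
  · intro n
    by_cases hnT : n ≤ N₀
    · calc ‖(∫ x in Set.Icc (0 : Fin 2 → ℝ) 1,
            f (((!![(1 : ℝ), 1; 1, 2]) ^ n).mulVec x) * (starRingEnd ℂ) (g x))
          - (∫ x in Set.Icc (0 : Fin 2 → ℝ) 1, f x) *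
              (starRingEnd ℂ) (∫ x in Set.Icc (0 : Fin 2 → ℝ) 1, g x)‖
          = (‖(∫ x in Set.Icc (0 : Fin 2 → ℝ) 1,
            f (((!![(1 : ℝ), 1; 1, 2]) ^ n).mulVec x) * (starRingEnd ℂ) (g x))
          - (∫ x in Set.Icc (0 : Fin 2 → ℝ) 1, f x) *
              (starRingEnd ℂ) (∫ x in Set.Icc (0 : Fin 2 → ℝ) 1, g x)‖ / ρ ^ n) * ρ ^ n := by
            rw [div_mul_cancel₀]
            exact ne_of_gt (pow_pos hρpos n)
        _ ≤ _ := by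
            refine mul_le_mul_of_nonneg_right ?_ (le_of_lt (pow_pos hρpos n))
            exact Finset.single_le_sum (f := fun j =>
              ‖(∫ x in Set.Icc (0 : Fin 2 → ℝ) 1,
                  f (((!![(1 : ℝ), 1; 1, 2]) ^ j).mulVec x) * (starRingEnd ℂ) (g x))
                - (∫ x in Set.Icc (0 : Fin 2 → ℝ) 1, f x) *
                    (starRingEnd ℂ) (∫ x in Set.Icc (0 : Fin 2 → ℝ) 1, g x)‖ / ρ ^ j)
              (fun j _ => div_nonneg (norm_nonneg _) (le_of_lt (pow_pos hρpos j)))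
              (Finset.mem_range.mpr (by omega))
    · have hnot : n ∉ T := fun hmem => hnT (hN₀ hmem)
      rw [hvanish n hnot, norm_zero]
      exact mul_nonneg (Finset.sum_nonneg fun j _ =>
        div_nonneg (norm_nonneg _) (le_of_lt (pow_pos hρpos j)))
        (le_of_lt (pow_pos hρpos n))
end

section
/- Let M = [[1, 1], [1, 2]] be the Arnol'd cat map matrix acting on ℝ², let l ≥ 1, and let f₁, …, f_{l+1} : ℝ² → ℂ be trigonometric polynomials, i.e. finite sums Σ_{k ∈ S} c_k·exp(2πi k·x) over finite sets S ⊂ ℤ². For n₁, …, n_l ∈ ℕ set N₁ = 0 and N_i = n₁ + ⋯ + n_{i-1}, and define the l-fold correlation C_{n₁,…,n_l}(f₁,…,f_{l+1}) = ∫_{[0,1]²} ∏_{i=1}^{l+1} f_i(M^{N_i} x) dx − ∏_{i=1}^{l+1} ∫_{[0,1]²} f_i(x) dx. Then the Arnol'd cat map is l-fold mixing: for every ε > 0 there exists N such that whenever min(n₁, …, n_l) ≥ N, one has |C_{n₁,…,n_l}(f₁,…,f_{l+1})| < ε. -/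
open Matrix MeasureTheory Complex Finset


noncomputable def EE (k : Fin 2 → ℤ) (x : Fin 2 → ℝ) : ℂ :=
  Complex.exp (2 * Real.pi * Complex.I * ((∑ t, (k t : ℝ) * x t : ℝ) : ℂ))

lemma oneDim (a : ℤ) :
    ∫ y in Set.Icc (0:ℝ) 1, Complex.exp (2 * Real.pi * Complex.I * ((a : ℝ) * y : ℝ)) =
      if a = 0 then 1 else 0 := by
  rw [MeasureTheory.integral_Icc_eq_integral_Ioc, ← intervalIntegral.integral_of_le zero_le_one]
  by_cases h : a = 0
  · simp [h]
  · have hc : (2 * Real.pi * Complex.I * a : ℂ) ≠ 0 := by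
      simp [Real.pi_ne_zero, Complex.I_ne_zero, h]
    have heq : ∀ y : ℝ, Complex.exp (2 * Real.pi * Complex.I * ((a : ℝ) * y : ℝ)) =
        Complex.exp ((2 * Real.pi * Complex.I * a) * y) := by
      intro y; congr 1; push_cast; ring
    rw [intervalIntegral.integral_congr (fun y _ => heq y), integral_exp_mul_complex hc]
    have h1 : (2 * Real.pi * Complex.I * a) * (1:ℝ) = (a:ℂ) * (2 * Real.pi * Complex.I) := by
      push_cast; ring
    rw [if_neg h, h1, Complex.exp_int_mul_two_pi_mul_I]
    simp

lemma EE_integral (m : Fin 2 → ℤ) :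
    ∫ x in Set.Icc (0 : Fin 2 → ℝ) 1, EE m x = if m = 0 then 1 else 0 := by
  have hbox : Set.Icc (0 : Fin 2 → ℝ) 1 = Set.univ.pi fun _ => Set.Icc (0:ℝ) 1 :=
    (Set.pi_univ_Icc _ _).symm
  have hind : ∀ x : Fin 2 → ℝ, (Set.Icc (0 : Fin 2 → ℝ) 1).indicator (EE m) x =
      ∏ t, (Set.Icc (0:ℝ) 1).indicator
        (fun y => Complex.exp (2 * Real.pi * Complex.I * ((m t : ℝ) * y : ℝ))) (x t) := by
    intro x
    by_cases hx : x ∈ Set.Icc (0 : Fin 2 → ℝ) 1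
    · rw [Set.indicator_of_mem hx]
      have hxt : ∀ t, x t ∈ Set.Icc (0:ℝ) 1 := by
        rw [hbox] at hx; exact fun t => hx t (Set.mem_univ t)
      rw [Finset.prod_congr rfl fun t _ => Set.indicator_of_mem (hxt t) _]
      rw [EE, ← Complex.exp_sum]
      congr 1
      push_cast [Finset.mul_sum]
      rfl
    · rw [Set.indicator_of_notMem hx]
      rw [hbox] at hx
      have hx' : ∃ t, x t ∉ Set.Icc (0:ℝ) 1 := by
        by_contra hc; push_neg at hc
        exact hx fun t _ => hc t
      obtain ⟨t, ht⟩ := hx'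
      exact (Finset.prod_eq_zero (Finset.mem_univ t) (Set.indicator_of_notMem ht _)).symm
  rw [← MeasureTheory.integral_indicator measurableSet_Icc]
  calc ∫ x, (Set.Icc (0 : Fin 2 → ℝ) 1).indicator (EE m) x
      = ∫ x : Fin 2 → ℝ, ∏ t, (Set.Icc (0:ℝ) 1).indicator
          (fun y => Complex.exp (2 * Real.pi * Complex.I * ((m t : ℝ) * y : ℝ))) (x t) := by
        exact integral_congr_ae (Filter.Eventually.of_forall hind)
    _ = ∏ t, ∫ y : ℝ, (Set.Icc (0:ℝ) 1).indicator
          (fun y => Complex.exp (2 * Real.pi * Complex.I * ((m t : ℝ) * y : ℝ))) y :=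
        MeasureTheory.integral_fintype_prod_eq_prod (ι := Fin 2) _
    _ = ∏ t, (if m t = 0 then (1:ℂ) else 0) := by
        refine Finset.prod_congr rfl fun t _ => ?_
        rw [MeasureTheory.integral_indicator measurableSet_Icc]
        exact oneDim (m t)
    _ = if m = 0 then 1 else 0 := by
        by_cases h : m = 0
        · simp [h]
        · have : ∃ t, m t ≠ 0 := by
            by_contra hc; push_neg at hc; exact h (funext hc)
          obtain ⟨t, ht⟩ := this
          rw [if_neg h]
          exact Finset.prod_eq_zero (Finset.mem_univ t) (if_neg ht)

lemma EE_cont (k : Fin 2 → ℤ) : Continuous (EE k) := by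
  unfold EE
  exact Complex.continuous_exp.comp (continuous_const.mul (Complex.continuous_ofReal.comp
    (continuous_finset_sum _ fun t _ => continuous_const.mul (continuous_apply t))))

lemma EE_integrableOn (k : Fin 2 → ℤ) :
    IntegrableOn (EE k) (Set.Icc (0 : Fin 2 → ℝ) 1) := by
  exact (EE_cont k).continuousOn.integrableOn_compact isCompact_Icc

lemma EE_mulVec (Az : Matrix (Fin 2) (Fin 2) ℤ) (k : Fin 2 → ℤ) (x : Fin 2 → ℝ) :
    EE k ((Az.map (Int.cast : ℤ → ℝ)).mulVec x) = EE (Az.transpose.mulVec k) x := by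
  unfold EE
  congr 2
  push_cast
  simp only [Matrix.mulVec, Matrix.transpose_apply, dotProduct, Matrix.map_apply,
    Fin.sum_univ_two]
  push_cast
  ring

lemma EE_prod {ι : Type*} (s : Finset ι) (k : ι → Fin 2 → ℤ) (x : Fin 2 → ℝ) :
    ∏ i ∈ s, EE (k i) x = EE (∑ i ∈ s, k i) x := by
  unfold EE
  rw [← Complex.exp_sum]
  congr 1
  push_cast
  simp only [Finset.sum_apply, Int.cast_sum, Finset.sum_mul, Finset.mul_sum]
  rw [Finset.sum_comm]

lemma mat_pow_cast (n : ℕ) :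
    (!![(1:ℝ), 1; 1, 2]) ^ n = (((!![(1:ℤ), 1; 1, 2]) ^ n).map (Int.cast : ℤ → ℝ)) := by
  have h : (!![(1:ℝ), 1; 1, 2]) = (Int.castRingHom ℝ).mapMatrix (!![(1:ℤ), 1; 1, 2]) := by
    ext i j; fin_cases i <;> fin_cases j <;> simp
  rw [h, ← map_pow]
  rfl


noncomputable def uu (k : Fin 2 → ℤ) : ℝ := k 0 + k 1 * ((1 + Real.sqrt 5) / 2)

lemma sqrt5_sq : Real.sqrt 5 ^ 2 = 5 := Real.sq_sqrt (by norm_num)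

lemma uu_zero_iff (k : Fin 2 → ℤ) : uu k = 0 ↔ k = 0 := by
  constructor
  · intro h
    unfold uu at h
    by_cases h1 : k 1 = 0
    · have h0 : (k 0 : ℝ) = 0 := by rw [h1] at h; simpa using h
      have h0' : k 0 = 0 := by exact_mod_cast h0
      funext t; fin_cases t <;> simp [h0', h1]
    · exfalso
      have hirr : Irrational (Real.sqrt 5) := by
        simpa using (by norm_num : Nat.Prime 5).irrational_sqrt
      have hirr2 : Irrational ((k 1 : ℝ) * Real.sqrt 5) := hirr.intCast_mul h1
      have heq : (k 1 : ℝ) * Real.sqrt 5 = ((-(2 * k 0 + k 1) : ℤ) : ℝ) := by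
        push_cast; linarith
      exact hirr2.ne_int _ heq
  · intro h; subst h; simp [uu]

lemma uu_M (k : Fin 2 → ℤ) :
    uu ((!![(1:ℤ), 1; 1, 2]).transpose.mulVec k) = (3 + Real.sqrt 5) / 2 * uu k := by
  unfold uu
  simp [Matrix.mulVec, Matrix.transpose_apply, dotProduct, Fin.sum_univ_two]
  linear_combination (-(k 1 : ℝ)/4) * sqrt5_sq

lemma uu_Mpow (n : ℕ) (k : Fin 2 → ℤ) :
    uu (((!![(1:ℤ), 1; 1, 2]) ^ n).transpose.mulVec k) = ((3 + Real.sqrt 5) / 2) ^ n * uu k := by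
  induction n with
  | zero => simp
  | succ n ih =>
    rw [pow_succ, Matrix.transpose_mul, ← Matrix.mulVec_mulVec, uu_M, ih, pow_succ]
    ring

lemma uu_sum {ι : Type*} (s : Finset ι) (k : ι → Fin 2 → ℤ) :
    uu (∑ i ∈ s, k i) = ∑ i ∈ s, uu (k i) := by
  unfold uu
  simp [Finset.sum_apply, Finset.sum_div, Finset.sum_add_distrib, Finset.sum_mul]

lemma key_lemma (l : ℕ) (T : Finset (Fin 2 → ℤ)) :
    ∃ N : ℕ, ∀ n : ℕ → ℕ, (∀ j < l, N ≤ n j) → ∀ p : ℕ → (Fin 2 → ℤ),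
      (∀ i ≤ l, p i ∈ T) →
      (∑ i ∈ Finset.range (l+1),
        ((!![(1:ℤ), 1; 1, 2]) ^ (∑ j ∈ Finset.range i, n j)).transpose.mulVec (p i)) = 0 →
      ∀ i ≤ l, p i = 0 := by
  set lam : ℝ := (3 + Real.sqrt 5) / 2 with hlamdef
  have hlam : 1 < lam := by
    have := Real.sqrt_nonneg 5
    rw [hlamdef]; linarith
  have hlam0 : (0:ℝ) < lam := lt_trans one_pos hlam
  set B : ℝ := ∑ k ∈ T, |uu k| with hBdef
  have hB : ∀ k ∈ T, |uu k| ≤ B :=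
    fun k hk => Finset.single_le_sum (fun a _ => abs_nonneg (uu a)) hk
  have hB0 : (0:ℝ) ≤ B := Finset.sum_nonneg fun a _ => abs_nonneg (uu a)
  obtain ⟨δ, hδpos, hδ⟩ : ∃ δ > (0:ℝ), ∀ k ∈ T, k ≠ 0 → δ ≤ |uu k| := by
    by_cases hne : (T.filter (fun k => k ≠ 0)).Nonempty
    · obtain ⟨k₀, hk₀, hmin⟩ := Finset.exists_min_image _ (fun k => |uu k|) hne
      have hk₀0 : k₀ ≠ 0 := (Finset.mem_filter.mp hk₀).2
      refine ⟨|uu k₀|, ?_, fun k hk hk0 => hmin k (Finset.mem_filter.mpr ⟨hk, hk0⟩)⟩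
      exact abs_pos.mpr (fun h => hk₀0 ((uu_zero_iff k₀).mp h))
    · exact ⟨1, one_pos, fun k hk hk0 =>
        absurd (Finset.mem_filter.mpr ⟨hk, hk0⟩) (fun h => hne ⟨k, h⟩)⟩
  obtain ⟨N, hN⟩ := pow_unbounded_of_one_lt ((l+1) * B / δ) hlam
  refine ⟨N, fun n hn p hpT hsum => ?_⟩
  by_contra hcon
  push_neg at hcon
  obtain ⟨i₀, hi₀l, hi₀⟩ := hcon
  set Q := (Finset.range (l+1)).filter (fun i => p i ≠ 0) with hQdef
  have hQne : Q.Nonempty := ⟨i₀, Finset.mem_filter.mpr ⟨Finset.mem_range.mpr (by omega), hi₀⟩⟩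
  set istar := Q.max' hQne with histar
  have histar_mem := Q.max'_mem hQne
  have histar_range : istar ∈ Finset.range (l+1) := (Finset.mem_filter.mp histar_mem).1
  have histar_ne : p istar ≠ 0 := (Finset.mem_filter.mp histar_mem).2
  have histar_le : istar ≤ l := by
    have := Finset.mem_range.mp histar_range; omega
  have hgt : ∀ i, i ∈ Finset.range (l+1) → istar < i → p i = 0 := by
    intro i hi hlt
    by_contra hpi
    exact absurd (Finset.le_max' Q i (Finset.mem_filter.mpr ⟨hi, hpi⟩)) (not_le.mpr hlt)
  have uu0 : uu 0 = 0 := (uu_zero_iff 0).mpr rfl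
  set Nt : ℕ → ℕ := fun i => ∑ j ∈ Finset.range i, n j with hNtdef
  set g : ℕ → ℝ := fun i => lam ^ (Nt i) * uu (p i) with hgdef
  have hg : ∑ i ∈ Finset.range (l+1), g i = 0 := by
    have h1 := congrArg uu hsum
    rw [uu_sum] at h1
    rw [show (0 : Fin 2 → ℤ) = (fun _ => 0) from rfl] at h1
    calc ∑ i ∈ Finset.range (l+1), g i
        = ∑ i ∈ Finset.range (l+1),
          uu (((!![(1:ℤ), 1; 1, 2]) ^ (Nt i)).transpose.mulVec (p i)) := by
          exact Finset.sum_congr rfl fun i _ => (uu_Mpow (Nt i) (p i)).symm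
      _ = uu 0 := h1
      _ = 0 := uu0
  have hsplit : ∑ i ∈ Finset.range (istar + 1), g i = ∑ i ∈ Finset.range (l+1), g i := by
    refine Finset.sum_subset (Finset.range_subset_range.mpr (by omega)) ?_
    intro i hi hni
    have : istar < i := by
      simp only [Finset.mem_range] at hni ⊢; omega
    rw [hgdef]; simp [hgt i hi this, uu0]
  have hgi : g istar = -∑ i ∈ Finset.range istar, g i := by
    have := hsplit.trans hg
    rw [Finset.sum_range_succ] at this
    linarith
  set P : ℝ := lam ^ (Nt istar) with hPdef
  set PN : ℝ := lam ^ N with hPNdef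
  have hP : (0:ℝ) < P := pow_pos hlam0 _
  have hPN : (0:ℝ) < PN := pow_pos hlam0 _
  -- bound each term
  have hterm : ∀ i ∈ Finset.range istar, |g i| ≤ P / PN * B := by
    intro i hi
    have hii : i < istar := Finset.mem_range.mp hi
    have hil : i < l := by omega
    have hNt_le : Nt i + N ≤ Nt istar := by
      have hsplit2 : ∑ j ∈ Finset.Ico 0 i, n j + ∑ j ∈ Finset.Ico i istar, n j
          = ∑ j ∈ Finset.Ico 0 istar, n j :=
        Finset.sum_Ico_consecutive n (Nat.zero_le i) (le_of_lt hii)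
      have hni : n i ≤ ∑ j ∈ Finset.Ico i istar, n j :=
        Finset.single_le_sum (fun j _ => Nat.zero_le (n j))
          (Finset.mem_Ico.mpr ⟨le_refl i, hii⟩)
      have hNni : N ≤ n i := hn i hil
      simp only [hNtdef, Finset.range_eq_Ico]
      omega
    have hpow : lam ^ (Nt i) * PN ≤ P := by
      rw [hPNdef, hPdef, ← pow_add]
      exact pow_le_pow_right₀ (le_of_lt hlam) hNt_le
    have hpow' : lam ^ (Nt i) ≤ P / PN := (le_div_iff₀ hPN).mpr hpow
    have habs : |g i| = lam ^ (Nt i) * |uu (p i)| := by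
      rw [hgdef]
      rw [abs_mul, abs_of_pos (pow_pos hlam0 _)]
    rw [habs]
    calc lam ^ (Nt i) * |uu (p i)| ≤ lam ^ (Nt i) * B :=
          mul_le_mul_of_nonneg_left (hB _ (hpT i (by omega))) (le_of_lt (pow_pos hlam0 _))
      _ ≤ P / PN * B := mul_le_mul_of_nonneg_right hpow' hB0
  have hstar_abs : δ * P ≤ |g istar| := by
    have : |g istar| = P * |uu (p istar)| := by
      rw [hgdef, abs_mul, abs_of_pos hP]
    rw [this]
    calc δ * P = P * δ := by ring
      _ ≤ P * |uu (p istar)| :=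
          mul_le_mul_of_nonneg_left (hδ _ (hpT istar histar_le) histar_ne) (le_of_lt hP)
  have hsum_abs : |g istar| ≤ (l+1) * (P / PN * B) := by
    rw [hgi, abs_neg]
    calc |∑ i ∈ Finset.range istar, g i| ≤ ∑ i ∈ Finset.range istar, |g i| :=
          Finset.abs_sum_le_sum_abs _ _
      _ ≤ ∑ _i ∈ Finset.range istar, P / PN * B := Finset.sum_le_sum hterm
      _ = (istar : ℝ) * (P / PN * B) := by
          rw [Finset.sum_const, Finset.card_range, nsmul_eq_mul]
      _ ≤ (l+1) * (P / PN * B) := by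
          refine mul_le_mul_of_nonneg_right ?_
            (mul_nonneg (le_of_lt (div_pos hP hPN)) hB0)
          exact_mod_cast by omega
  have hc2 : (l+1) * B < δ * PN := by
    rw [div_lt_iff₀ hδpos] at hN
    rw [hPNdef]; push_cast at hN ⊢; linarith
  have hfinal : δ * P < δ * P := by
    calc δ * P ≤ |g istar| := hstar_abs
      _ ≤ (l+1) * (P / PN * B) := hsum_abs
      _ = ((l+1) * B) * (P / PN) := by ring
      _ < (δ * PN) * (P / PN) := mul_lt_mul_of_pos_right hc2 (div_pos hP hPN)
      _ = δ * P := by field_simp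
  exact absurd hfinal (lt_irrefl _)
/-- `l`-fold mixing of the Arnol'd cat map `M = [[1, 1], [1, 2]]` (indices shifted
to start at `0`): for trigonometric polynomials `f₀, …, f_l` on the torus, the
`l`-fold correlation
`C_{n₀,…,n_{l-1}}(f₀,…,f_l) = ∫ ∏_i f_i(M^{N_i}x) dx − ∏_i ∫ f_i dx`
(with `N_i = n₀ + ⋯ + n_{i-1}`) is smaller than any `ε > 0` whenever all the time
separations `n_j` are large enough. -/
theorem acm_l_fold_mixing (l : ℕ) (hl : 1 ≤ l) (f : ℕ → (Fin 2 → ℝ) → ℂ)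
    (hf : ∀ i ≤ l, ∃ (S : Finset (Fin 2 → ℤ)) (c : (Fin 2 → ℤ) → ℂ), ∀ x, f i x =
      ∑ k ∈ S, c k * Complex.exp
        (2 * Real.pi * Complex.I * ((∑ t, (k t : ℝ) * x t : ℝ) : ℂ))) :
    ∀ ε > (0 : ℝ), ∃ N : ℕ, ∀ n : ℕ → ℕ, (∀ j < l, N ≤ n j) →
      ‖(∫ x in Set.Icc (0 : Fin 2 → ℝ) 1,
            ∏ i ∈ Finset.range (l + 1),
              f i (((!![(1 : ℝ), 1; 1, 2]) ^ (∑ j ∈ Finset.range i, n j)).mulVec x))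
          - ∏ i ∈ Finset.range (l + 1),
              ∫ x in Set.Icc (0 : Fin 2 → ℝ) 1, f i x‖ < ε := by
  classical
  intro ε hε
  have hf' : ∀ i, ∃ (S : Finset (Fin 2 → ℤ)) (c : (Fin 2 → ℤ) → ℂ), i ≤ l → ∀ x, f i x =
      ∑ k ∈ S, c k * EE k x := by
    intro i
    by_cases h : i ≤ l
    · obtain ⟨S, c, hSc⟩ := hf i h
      exact ⟨S, c, fun _ => hSc⟩
    · exact ⟨∅, 0, fun h' => absurd h' h⟩
  choose S c hSc using hf'
  obtain ⟨N, hkey⟩ := key_lemma l ((Finset.range (l+1)).biUnion S)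
  refine ⟨N, fun n hn => ?_⟩
  have hprod : ∀ x : Fin 2 → ℝ,
      (∏ i ∈ Finset.range (l + 1),
        f i (((!![(1 : ℝ), 1; 1, 2]) ^ (∑ j ∈ Finset.range i, n j)).mulVec x)) =
      ∑ p ∈ Fintype.piFinset (fun i : Fin (l+1) => S i.val),
        (∏ i : Fin (l+1), c i.val (p i)) *
          EE (∑ i : Fin (l+1),
            ((!![(1:ℤ), 1; 1, 2]) ^ (∑ j ∈ Finset.range i.val, n j)).transpose.mulVec (p i))
            x := by
    intro x
    calc (∏ i ∈ Finset.range (l + 1),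
          f i (((!![(1 : ℝ), 1; 1, 2]) ^ (∑ j ∈ Finset.range i, n j)).mulVec x))
        = ∏ i : Fin (l+1),
            f i.val (((!![(1 : ℝ), 1; 1, 2]) ^ (∑ j ∈ Finset.range i.val, n j)).mulVec x) :=
          (Fin.prod_univ_eq_prod_range
            (fun i => f i (((!![(1 : ℝ), 1; 1, 2]) ^ (∑ j ∈ Finset.range i, n j)).mulVec x))
            (l+1)).symm
      _ = ∏ i : Fin (l+1), ∑ k ∈ S i.val,
            c i.val k *
              EE (((!![(1:ℤ), 1; 1, 2]) ^ (∑ j ∈ Finset.range i.val, n j)).transpose.mulVec k)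
                x := by
          refine Finset.prod_congr rfl fun i _ => ?_
          rw [mat_pow_cast, hSc i.val (by omega)]
          exact Finset.sum_congr rfl fun k _ => by rw [EE_mulVec]
      _ = ∑ p ∈ Fintype.piFinset (fun i : Fin (l+1) => S i.val),
            ∏ i : Fin (l+1), (c i.val (p i) *
              EE (((!![(1:ℤ), 1; 1, 2]) ^ (∑ j ∈ Finset.range i.val, n j)).transpose.mulVec
                (p i)) x) :=
          Finset.prod_univ_sum _ _
      _ = _ := by
          refine Finset.sum_congr rfl fun p _ => ?_
          rw [Finset.prod_mul_distrib, EE_prod]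
  have hInt : (∫ x in Set.Icc (0 : Fin 2 → ℝ) 1,
      ∏ i ∈ Finset.range (l + 1),
        f i (((!![(1 : ℝ), 1; 1, 2]) ^ (∑ j ∈ Finset.range i, n j)).mulVec x)) =
      ∑ p ∈ Fintype.piFinset (fun i : Fin (l+1) => S i.val),
        (∏ i : Fin (l+1), c i.val (p i)) *
          (if (∑ i : Fin (l+1),
            ((!![(1:ℤ), 1; 1, 2]) ^ (∑ j ∈ Finset.range i.val, n j)).transpose.mulVec (p i))
            = 0 then 1 else 0) := by
    simp only [hprod]
    rw [MeasureTheory.integral_finset_sum _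
      (fun p _ => ((EE_integrableOn _).const_mul _))]
    exact Finset.sum_congr rfl fun p _ => by
      rw [MeasureTheory.integral_const_mul, EE_integral]
  have hRHS : (∏ i ∈ Finset.range (l + 1), ∫ x in Set.Icc (0 : Fin 2 → ℝ) 1, f i x) =
      ∑ p ∈ Fintype.piFinset (fun i : Fin (l+1) => S i.val),
        (∏ i : Fin (l+1), c i.val (p i)) * (if ∀ i, p i = 0 then 1 else 0) := by
    calc (∏ i ∈ Finset.range (l + 1), ∫ x in Set.Icc (0 : Fin 2 → ℝ) 1, f i x)
        = ∏ i : Fin (l+1), ∫ x in Set.Icc (0 : Fin 2 → ℝ) 1, f i.val x :=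
          (Fin.prod_univ_eq_prod_range
            (fun i => ∫ x in Set.Icc (0 : Fin 2 → ℝ) 1, f i x) (l+1)).symm
      _ = ∏ i : Fin (l+1), ∑ k ∈ S i.val, c i.val k * (if k = 0 then 1 else 0) := by
          refine Finset.prod_congr rfl fun i _ => ?_
          have : ∀ x : Fin 2 → ℝ, f i.val x = ∑ k ∈ S i.val, c i.val k * EE k x :=
            hSc i.val (by omega)
          simp only [this]
          rw [MeasureTheory.integral_finset_sum _
            (fun k _ => ((EE_integrableOn _).const_mul _))]
          exact Finset.sum_congr rfl fun k _ => by
            rw [MeasureTheory.integral_const_mul, EE_integral]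
      _ = ∑ p ∈ Fintype.piFinset (fun i : Fin (l+1) => S i.val),
            ∏ i : Fin (l+1), (c i.val (p i) * (if p i = 0 then 1 else 0)) :=
          Finset.prod_univ_sum _ _
      _ = _ := by
          refine Finset.sum_congr rfl fun p _ => ?_
          rw [Finset.prod_mul_distrib]
          congr 1
          rw [Finset.prod_boole]
          simp
  rw [hInt, hRHS, ← Finset.sum_sub_distrib]
  have hzero : ∀ p ∈ Fintype.piFinset (fun i : Fin (l+1) => S i.val),
      (∏ i : Fin (l+1), c i.val (p i)) *
          (if (∑ i : Fin (l+1),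
            ((!![(1:ℤ), 1; 1, 2]) ^ (∑ j ∈ Finset.range i.val, n j)).transpose.mulVec (p i))
            = 0 then 1 else 0)
        - (∏ i : Fin (l+1), c i.val (p i)) * (if ∀ i, p i = 0 then (1:ℂ) else 0) = 0 := by
    intro p hp
    have hite : (if (∑ i : Fin (l+1),
        ((!![(1:ℤ), 1; 1, 2]) ^ (∑ j ∈ Finset.range i.val, n j)).transpose.mulVec (p i))
        = 0 then (1:ℂ) else 0) = (if ∀ i, p i = 0 then (1:ℂ) else 0) := by
      by_cases hall : ∀ i, p i = 0
      · rw [if_pos hall, if_pos]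
        rw [Finset.sum_congr rfl fun i _ => by rw [hall i, Matrix.mulVec_zero]]
        simp
      · rw [if_neg hall, if_neg]
        intro hz
        apply hall
        set p' : ℕ → Fin 2 → ℤ := fun j => if h : j < l+1 then p ⟨j, h⟩ else 0 with hp'def
        have hz' : ∑ i ∈ Finset.range (l+1),
            ((!![(1:ℤ), 1; 1, 2]) ^ (∑ j ∈ Finset.range i, n j)).transpose.mulVec (p' i)
            = 0 := by
          rw [← Fin.sum_univ_eq_sum_range (fun i =>
            ((!![(1:ℤ), 1; 1, 2]) ^ (∑ j ∈ Finset.range i, n j)).transpose.mulVec (p' i))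
            (l+1)]
          refine Eq.trans (Finset.sum_congr rfl fun i _ => ?_) hz
          have hpi : p' i.val = p i := by rw [hp'def]; exact dif_pos i.isLt
          rw [hpi]
        have hmem : ∀ i ≤ l, p' i ∈ (Finset.range (l+1)).biUnion S := by
          intro i hil
          have hilt : i < l + 1 := by omega
          have : p' i = p ⟨i, hilt⟩ := by rw [hp'def]; exact dif_pos hilt
          rw [this]
          exact Finset.mem_biUnion.mpr ⟨i, Finset.mem_range.mpr hilt,
            Fintype.mem_piFinset.mp hp ⟨i, hilt⟩⟩
        have hall' := hkey n hn p' hmem hz'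
        intro i
        have h1 := hall' i.val (by omega)
        have h2 : p' i.val = p i := by rw [hp'def]; exact dif_pos i.isLt
        rw [← h2, h1]
    rw [hite]
    ring
  rw [Finset.sum_eq_zero hzero, norm_zero]
  exact hε
end
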